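/- Under Algorithm 2 with parameter δ ≥ 1, at most 5δ greater neighbors of any vertex i initiate a connection to i, and at most 5δ lesser neighbors of i initiate a connection to i; hence the degree of every vertex in the final topology is at most max{δ, 5} + 10δ. -/

import Mathlib

noncomputable section

/-- The Gilbert graph on vertex set `Fin n`: `i ≠ j` are adjacent iff `dist (x i) (x j) ≤ R`. -/
def gilbert (n : ℕ) (x : Fin n → EuclideanSpace ℝ (Fin 2)) (R : ℝ) : SimpleGraph (Fin n) where
  Adj i j := i ≠ j ∧ dist (x i) (x j) ≤ R
  symm := by
    refine ⟨?_⟩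
    intro i j h
    exact ⟨h.1.symm, by rw [dist_comm]; exact h.2⟩
  loopless := by refine ⟨?_⟩; intro i h; exact h.1 rfl

/-- The lesser neighborhood `N_i = {j < i : dist (x i) (x j) ≤ R}`. -/
def lesserN (n : ℕ) (x : Fin n → EuclideanSpace ℝ (Fin 2)) (R : ℝ) (i : Fin n) : Set (Fin n) :=
  {j | j < i ∧ dist (x i) (x j) ≤ R}

/-- Vertex `i` initiates a connection to `j` iff `j` is the maximum-index vertex of its
connected component in the Gilbert graph induced on the lesser neighborhood `N_i`. -/
def initiates (n : ℕ) (x : Fin n → EuclideanSpace ℝ (Fin 2)) (R : ℝ) (i j : Fin n) : Prop :=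
  ∃ hj : j ∈ lesserN n x R i,
    ∀ k, ∀ hk : k ∈ lesserN n x R i,
      ((gilbert n x R).induce (lesserN n x R i)).Reachable ⟨j, hj⟩ ⟨k, hk⟩ → k ≤ j

/-- The topology produced by Algorithm 1: the symmetrization of the initiated connections. -/
def Agraph (n : ℕ) (x : Fin n → EuclideanSpace ℝ (Fin 2)) (R : ℝ) : SimpleGraph (Fin n) where
  Adj i j := initiates n x R i j ∨ initiates n x R j i
  symm := ⟨fun i j h => Or.symm h⟩
  loopless := by
    refine ⟨?_⟩
    intro i h
    rcases h with ⟨hj, _⟩ | ⟨hj, _⟩ <;> exact absurd hj.1 (lt_irrefl i)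

attribute [local instance] Classical.propDecidable

/-- The lesser neighbors of `i`, as a finset. -/
def lesserF (n : ℕ) (x : Fin n → EuclideanSpace ℝ (Fin 2)) (R : ℝ) (i : Fin n) :
    Finset (Fin n) :=
  Finset.univ.filter (fun j => j < i ∧ dist (x i) (x j) ≤ R)

/-- The greater neighbors of `i`, as a finset. -/
def greaterF (n : ℕ) (x : Fin n → EuclideanSpace ℝ (Fin 2)) (R : ℝ) (i : Fin n) :
    Finset (Fin n) :=
  Finset.univ.filter (fun j => i < j ∧ dist (x i) (x j) ≤ R)

/-- The connections initiated in Line 1 of Algorithm 2 (those of Algorithm 1):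
the maximum-index vertex of each component of the Gilbert graph induced on `N_i`. -/
def MsetF (n : ℕ) (x : Fin n → EuclideanSpace ℝ (Fin 2)) (R : ℝ) (i : Fin n) :
    Finset (Fin n) :=
  Finset.univ.filter (fun j => initiates n x R i j)

/-- Greedy phase adding `max (pool \ C)` while `|C| < δ` and `pool \ C ≠ ∅`
(Lines 2–3 of Algorithm 2), with explicit fuel. -/
def phaseMax {n : ℕ} (δ : ℕ) (pool : Finset (Fin n)) :
    ℕ → Finset (Fin n) → Finset (Fin n)
  | 0, C => C
  | fuel + 1, C =>
    if h : C.card < δ ∧ (pool \ C).Nonempty then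
      phaseMax δ pool fuel (insert ((pool \ C).max' h.2) C)
    else C

/-- Greedy phase adding `min (pool \ C)` while `|C| < δ` and `pool \ C ≠ ∅`
(Lines 4–5 of Algorithm 2), with explicit fuel. -/
def phaseMin {n : ℕ} (δ : ℕ) (pool : Finset (Fin n)) :
    ℕ → Finset (Fin n) → Finset (Fin n)
  | 0, C => C
  | fuel + 1, C =>
    if h : C.card < δ ∧ (pool \ C).Nonempty then
      phaseMin δ pool fuel (insert ((pool \ C).min' h.2) C)
    else C

/-- The set `C_i` of connections initiated by vertex `i` under Algorithm 2. -/
def Cset (n : ℕ) (x : Fin n → EuclideanSpace ℝ (Fin 2)) (R : ℝ) (δ : ℕ) (i : Fin n) :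
    Finset (Fin n) :=
  phaseMin δ (greaterF n x R i) n
    (phaseMax δ (lesserF n x R i) n (MsetF n x R i))

/-- The final topology of Algorithm 2: edge `(i,j)` present iff `j ∈ C_i` or `i ∈ C_j`. -/
def topo2 (n : ℕ) (x : Fin n → EuclideanSpace ℝ (Fin 2)) (R : ℝ) (δ : ℕ) :
    SimpleGraph (Fin n) where
  Adj i j := i ≠ j ∧ (j ∈ Cset n x R δ i ∨ i ∈ Cset n x R δ j)
  symm := ⟨fun i j h => ⟨h.1.symm, Or.symm h.2⟩⟩
  loopless := ⟨fun i h => h.1 rfl⟩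

section Aux
open Real Complex


lemma cos_half_ge {t : ℝ} (h : |t| ≤ π/3) : (1:ℝ)/2 ≤ Real.cos t := by
  rw [← Real.cos_abs]
  have h1 : Real.cos (π/3) ≤ Real.cos |t| := by
    apply Real.cos_le_cos_of_nonneg_of_le_pi (abs_nonneg t) (by linarith [Real.pi_pos]) h
  rwa [Real.cos_pi_div_three] at h1

lemma dist_le_of_cos {R : ℝ} {z w : ℂ} (hz : ‖z‖ ≤ R) (hw : ‖w‖ ≤ R)
    (hc : (1:ℝ)/2 ≤ Real.cos (Complex.arg z - Complex.arg w)) : dist z w ≤ R := by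
  have hR : 0 ≤ R := le_trans (norm_nonneg z) hz
  set r := ‖z‖ with hr
  set s := ‖w‖ with hs
  have hr0 : 0 ≤ r := norm_nonneg z
  have hs0 : 0 ≤ s := norm_nonneg w
  have hzre : z.re = r * Real.cos (arg z) := (Complex.norm_mul_cos_arg z).symm
  have hzim : z.im = r * Real.sin (arg z) := (Complex.norm_mul_sin_arg z).symm
  have hwre : w.re = s * Real.cos (arg w) := (Complex.norm_mul_cos_arg w).symm
  have hwim : w.im = s * Real.sin (arg w) := (Complex.norm_mul_sin_arg w).symm
  have hdist : dist z w ^ 2 = r^2 + s^2 - 2*r*s*Real.cos (arg z - arg w) := by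
    rw [Complex.dist_eq, Complex.sq_norm, Complex.normSq_apply]
    simp only [Complex.sub_re, Complex.sub_im]
    rw [hzre, hzim, hwre, hwim, Real.cos_sub]
    have c1 := Real.sin_sq_add_cos_sq (arg z)
    have c2 := Real.sin_sq_add_cos_sq (arg w)
    ring_nf
    nlinarith [c1, c2]
  have hsq : dist z w ^ 2 ≤ R ^ 2 := by
    rw [hdist]
    nlinarith [mul_nonneg (sub_nonneg.2 hz) (sub_nonneg.2 hw),
      mul_nonneg hr0 (sub_nonneg.2 hz), mul_nonneg hs0 (sub_nonneg.2 hw),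
      mul_nonneg (mul_nonneg hr0 hs0) (by linarith : (0:ℝ) ≤ Real.cos (arg z - arg w) - 1/2)]
  nlinarith [dist_nonneg (x := z) (y := w), hsq]

/-- Among any six points in the closed disk of radius `R`, two (with distinct indices)
are at distance at most `R`. -/
lemma six_points {R : ℝ} (p : Fin 6 → ℂ) (h : ∀ j, ‖p j‖ ≤ R) :
    ∃ a b : Fin 6, a ≠ b ∧ dist (p a) (p b) ≤ R := by
  have hπ : 0 < π := Real.pi_pos
  have h2π : 0 < 2 * π := by linarith
  set d : Fin 6 → ℝ := fun j => toIcoMod h2π 0 (arg (p j) - arg (p 0)) with hd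
  have hdmem : ∀ j, d j ∈ Set.Ico (0:ℝ) (2*π) := by
    intro j
    simpa using toIcoMod_mem_Ico h2π 0 (arg (p j) - arg (p 0))
  -- cos (arg (p a) - arg (p b)) = cos (d a - d b)
  have hcos : ∀ a b : Fin 6, Real.cos (d a - d b) = Real.cos (arg (p a) - arg (p b)) := by
    intro a b
    obtain ⟨ka, hka⟩ : ∃ k : ℤ, d a = (arg (p a) - arg (p 0)) + k * (2*π) := by
      refine ⟨-(toIcoDiv h2π 0 (arg (p a) - arg (p 0))), ?_⟩
      have := toIcoMod_sub_self h2π 0 (arg (p a) - arg (p 0))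
      rw [zsmul_eq_mul] at this
      push_cast at this ⊢
      linarith [this]
    obtain ⟨kb, hkb⟩ : ∃ k : ℤ, d b = (arg (p b) - arg (p 0)) + k * (2*π) := by
      refine ⟨-(toIcoDiv h2π 0 (arg (p b) - arg (p 0))), ?_⟩
      have := toIcoMod_sub_self h2π 0 (arg (p b) - arg (p 0))
      rw [zsmul_eq_mul] at this
      push_cast at this ⊢
      linarith [this]
    have : d a - d b = (arg (p a) - arg (p b)) + ((ka - kb : ℤ) : ℝ) * (2*π) := by
      push_cast; rw [hka, hkb]; ring
    rw [this, Real.cos_add_int_mul_two_pi]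
  -- main pigeonhole
  by_cases hnear : ∃ j : Fin 6, j ≠ 0 ∧ (d j ≤ π/3 ∨ 5*π/3 ≤ d j)
  · obtain ⟨j, hj0, hj⟩ := hnear
    refine ⟨j, 0, hj0, ?_⟩
    apply dist_le_of_cos (h j) (h 0)
    rw [← hcos]
    have hd0 : d 0 = 0 := by
      have : arg (p 0) - arg (p 0) = 0 := sub_self _
      simp only [hd, this]
      simpa using toIcoMod_self h2π 0
    rcases hj with hj | hj
    · apply cos_half_ge
      rw [hd0, sub_zero, _root_.abs_of_nonneg (hdmem j).1]
      exact hj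
    · have : Real.cos (d j - d 0) = Real.cos (d j - d 0 - 2*π) := by
        have : d j - d 0 - 2*π = d j - d 0 + (-1 : ℤ) * (2*π) := by push_cast; ring
        rw [this, Real.cos_add_int_mul_two_pi]
      rw [this]
      apply cos_half_ge
      rw [hd0, sub_zero]
      rw [abs_le]
      constructor
      · linarith [(hdmem j).2]
      · linarith [(hdmem j).2]
  · push_neg at hnear
    -- all j ≠ 0 have d j ∈ (π/3, 5π/3); pigeonhole into 4 intervals of length π/3
    have key : ∀ j : Fin 6, j ≠ 0 → π/3 < d j ∧ d j < 5*π/3 := by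
      intro j hj
      exact ⟨(hnear j hj).1, (hnear j hj).2⟩
    set f : Fin 6 → ℕ := fun j => ⌊d j / (π/3)⌋₊ with hf
    have hf14 : ∀ j : Fin 6, j ≠ 0 → f j ∈ (Finset.Icc 1 4 : Finset ℕ) := by
      intro j hj
      obtain ⟨h1, h2⟩ := key j hj
      have hπ3 : (0:ℝ) < π/3 := by linarith
      have hdj0 : (0:ℝ) ≤ d j / (π/3) := div_nonneg (hdmem j).1 (le_of_lt hπ3)
      have hfl : 1 ≤ f j := by
        rw [hf]
        simp only [Nat.one_le_floor_iff]
        rw [le_div_iff₀ hπ3]; linarith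
      have hfu : f j < 5 := by
        have h5 : d j / (π/3) < 5 := by rw [div_lt_iff₀ hπ3]; linarith
        exact Nat.floor_lt hdj0 |>.2 (by exact_mod_cast h5)
      simp only [Finset.mem_Icc]
      omega
    have hcard : (Finset.Icc 1 4 : Finset ℕ).card < (Finset.univ.erase (0 : Fin 6)).card := by
      simp
    obtain ⟨a, ha, b, hb, hab, hfab⟩ :=
      Finset.exists_ne_map_eq_of_card_lt_of_maps_to hcard
        (fun j hj => hf14 j (Finset.ne_of_mem_erase hj))
    refine ⟨a, b, hab, ?_⟩
    apply dist_le_of_cos (h a) (h b)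
    rw [← hcos]
    apply cos_half_ge
    have hπ3 : (0:ℝ) < π/3 := by linarith
    have h1 : (f a : ℝ) * (π/3) ≤ d a ∧ d a < ((f a : ℝ)+1) * (π/3) := by
      constructor
      · rw [hf]; simp only []
        have := Nat.floor_le (div_nonneg (hdmem a).1 (le_of_lt hπ3))
        calc (↑⌊d a / (π/3)⌋₊ : ℝ) * (π/3) ≤ (d a / (π/3)) * (π/3) := by
              apply mul_le_mul_of_nonneg_right this (le_of_lt hπ3)
          _ = d a := by field_simp
      · have := Nat.lt_floor_add_one (d a / (π/3))
        calc d a = (d a / (π/3)) * (π/3) := by field_simp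
          _ < (↑⌊d a / (π/3)⌋₊ + 1) * (π/3) := by
              apply mul_lt_mul_of_pos_right this hπ3
    have h2 : (f b : ℝ) * (π/3) ≤ d b ∧ d b < ((f b : ℝ)+1) * (π/3) := by
      constructor
      · have := Nat.floor_le (div_nonneg (hdmem b).1 (le_of_lt hπ3))
        calc (↑⌊d b / (π/3)⌋₊ : ℝ) * (π/3) ≤ (d b / (π/3)) * (π/3) := by
              apply mul_le_mul_of_nonneg_right this (le_of_lt hπ3)
          _ = d b := by field_simp
      · have := Nat.lt_floor_add_one (d b / (π/3))
        calc d b = (d b / (π/3)) * (π/3) := by field_simp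
          _ < (↑⌊d b / (π/3)⌋₊ + 1) * (π/3) := by
              apply mul_lt_mul_of_pos_right this hπ3
    have hfeq : (f a : ℝ) = (f b : ℝ) := by exact_mod_cast hfab
    rw [abs_le]
    constructor <;> nlinarith [h1.1, h1.2, h2.1, h2.2]



/-- The plane as complex numbers. -/
def toC (v : EuclideanSpace ℝ (Fin 2)) : ℂ := ⟨v 0, v 1⟩

lemma dist_toC (v w : EuclideanSpace ℝ (Fin 2)) : dist (toC v) (toC w) = dist v w := by
  rw [Complex.dist_eq, Complex.norm_def, Complex.normSq_apply, EuclideanSpace.dist_eq]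
  simp only [toC, Complex.sub_re, Complex.sub_im, Fin.sum_univ_two, Real.dist_eq]
  congr 1
  rw [_root_.sq_abs, _root_.sq_abs]
  ring

lemma indep_card_le_five {n : ℕ} (x : Fin n → EuclideanSpace ℝ (Fin 2)) {R : ℝ}
    (c : EuclideanSpace ℝ (Fin 2)) (T : Finset (Fin n))
    (h1 : ∀ k ∈ T, dist c (x k) ≤ R)
    (h2 : ∀ a ∈ T, ∀ b ∈ T, a ≠ b → R < dist (x a) (x b)) : T.card ≤ 5 := by
  by_contra hc
  push_neg at hc
  obtain ⟨U, hUT, hU6⟩ := Finset.exists_subset_card_eq (by omega : 6 ≤ T.card)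
  set e := U.orderIsoOfFin hU6 with he
  set p : Fin 6 → ℂ := fun j => toC (x (e j)) - toC c with hp
  have habs : ∀ j, ‖p j‖ ≤ R := by
    intro j
    have : ‖p j‖ = dist (toC (x (e j))) (toC c) := by
      rw [Complex.dist_eq]
    rw [this, dist_toC, dist_comm]
    exact h1 _ (hUT (e j).2)
  obtain ⟨a, b, hab, hd⟩ := six_points p habs
  have hdist : dist (p a) (p b) = dist (x (e a)) (x (e b)) := by
    have : p a - p b = toC (x (e a)) - toC (x (e b)) := by rw [hp]; ring
    rw [Complex.dist_eq, this, ← Complex.dist_eq, dist_toC]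
  have hne : (e a : Fin n) ≠ (e b : Fin n) := by
    intro h
    exact hab (e.injective (Subtype.ext h))
  have := h2 _ (hUT (e a).2) _ (hUT (e b).2) hne
  rw [hdist] at hd
  linarith



/-- Greedy (bottom-up) maximal independent set membership predicate. -/
def inMIS {n : ℕ} (x : Fin n → EuclideanSpace ℝ (Fin 2)) (R : ℝ) (S : Finset (Fin n)) :
    Fin n → Prop
  | k => k ∈ S ∧ ∀ j : Fin n, j < k → inMIS x R S j → R < dist (x k) (x j)
termination_by k => (k : ℕ)
decreasing_by exact ‹_ < _›

lemma inMIS_iff {n : ℕ} (x : Fin n → EuclideanSpace ℝ (Fin 2)) (R : ℝ) (S : Finset (Fin n))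
    (k : Fin n) :
    inMIS x R S k ↔ k ∈ S ∧ ∀ j : Fin n, j < k → inMIS x R S j → R < dist (x k) (x j) := by
  rw [inMIS]

/-- degeneracy bound: if every vertex of `S` has fewer than `δ` lower neighbors in `S`
(w.r.t. the `dist ≤ R` graph) and all of `S` lies in the disk of radius `R` around `c`,
then `|S| ≤ 5δ`. -/
lemma five_delta {n : ℕ} (x : Fin n → EuclideanSpace ℝ (Fin 2)) (R : ℝ)
    (c : EuclideanSpace ℝ (Fin 2)) :
    ∀ (δ : ℕ) (S : Finset (Fin n)),
      (∀ k ∈ S, dist c (x k) ≤ R) →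
      (∀ k ∈ S, (S.filter (fun t => t < k ∧ dist (x k) (x t) ≤ R)).card < δ) →
      S.card ≤ 5 * δ := by
  intro δ
  induction δ with
  | zero =>
    intro S _ h2
    have : S = ∅ := Finset.eq_empty_of_forall_notMem
      (fun k hk => absurd (h2 k hk) (Nat.not_lt_zero _))
    simp [this]
  | succ δ ih =>
    intro S h1 h2
    set I := S.filter (inMIS x R S) with hI
    have hIS : I ⊆ S := Finset.filter_subset _ _
    have hI5 : I.card ≤ 5 := by
      apply indep_card_le_five x c I (fun k hk => h1 k (hIS hk))
      intro a ha b hb hab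
      have ha' := (Finset.mem_filter.1 ha).2
      have hb' := (Finset.mem_filter.1 hb).2
      rcases lt_or_gt_of_ne hab with hlt | hgt
      · rw [dist_comm]
        exact ((inMIS_iff x R S b).1 hb').2 a hlt ha'
      · exact ((inMIS_iff x R S a).1 ha').2 b hgt hb'
    set S' := S \ I with hS'
    have hstep : ∀ k ∈ S', (S'.filter (fun t => t < k ∧ dist (x k) (x t) ≤ R)).card < δ := by
      intro k hk
      set F' := S'.filter (fun t => t < k ∧ dist (x k) (x t) ≤ R) with hF'
      set F := S.filter (fun t => t < k ∧ dist (x k) (x t) ≤ R) with hF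
      obtain ⟨hkS, hkI⟩ := Finset.mem_sdiff.1 hk
      have hnot : ¬ inMIS x R S k := fun h => hkI (Finset.mem_filter.2 ⟨hkS, h⟩)
      rw [inMIS_iff] at hnot
      push_neg at hnot
      obtain ⟨j, hjk, hjm, hjd⟩ := hnot hkS
      have hjS : j ∈ S := ((inMIS_iff x R S j).1 hjm).1
      have hjI : j ∈ I := Finset.mem_filter.2 ⟨hjS, hjm⟩
      have hjf : j ∈ F := Finset.mem_filter.2 ⟨hjS, hjk, hjd⟩
      have hsub : F' ⊆ F.erase j := by
        intro t ht
        rw [hF'] at ht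
        obtain ⟨htS', htp⟩ := Finset.mem_filter.1 ht
        obtain ⟨htS, htI⟩ := Finset.mem_sdiff.1 htS'
        exact Finset.mem_erase.2 ⟨fun h => htI (h ▸ hjI), Finset.mem_filter.2 ⟨htS, htp⟩⟩
      have hle := Finset.card_le_card hsub
      have hcard := Finset.card_erase_of_mem hjf
      have hlt : F.card < δ + 1 := h2 k hkS
      have hpos : 0 < F.card := Finset.card_pos.2 ⟨j, hjf⟩
      omega
    have hS'card := ih S' (fun k hk => h1 k (Finset.mem_sdiff.1 hk).1) hstep
    have : S.card = S'.card + I.card := by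
      rw [hS']
      exact (Finset.card_sdiff_add_card_eq_card hIS).symm
    omega



lemma five_delta' {n : ℕ} (x : Fin n → EuclideanSpace ℝ (Fin 2)) (R : ℝ)
    (c : EuclideanSpace ℝ (Fin 2)) (δ : ℕ) (S : Finset (Fin n))
    (h1 : ∀ k ∈ S, dist c (x k) ≤ R)
    (h2 : ∀ k ∈ S, (S.filter (fun t => k < t ∧ dist (x k) (x t) ≤ R)).card < δ) :
    S.card ≤ 5 * δ := by
  have hrevinj : Function.Injective (Fin.rev : Fin n → Fin n) := Fin.rev_injective
  rw [← Finset.card_image_of_injective S hrevinj]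
  apply five_delta (fun k => x k.rev) R c δ
  · intro k hk
    obtain ⟨m, hm, rfl⟩ := Finset.mem_image.1 hk
    rw [Fin.rev_rev]
    exact h1 m hm
  · intro k hk
    obtain ⟨m, hm, rfl⟩ := Finset.mem_image.1 hk
    have heq : (S.image Fin.rev).filter
        (fun t => t < m.rev ∧ dist (x m.rev.rev) (x t.rev) ≤ R) =
        (S.filter (fun t => m < t ∧ dist (x m) (x t) ≤ R)).image Fin.rev := by
      ext t'
      simp only [Finset.mem_filter, Finset.mem_image]
      constructor
      · rintro ⟨⟨t, ht, rfl⟩, h1', h2'⟩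
        refine ⟨t, ⟨ht, ?_, ?_⟩, rfl⟩
        · rwa [Fin.rev_lt_rev] at h1'
        · rwa [Fin.rev_rev, Fin.rev_rev] at h2'
      · rintro ⟨t, ⟨ht, hlt, hdist⟩, rfl⟩
        refine ⟨⟨t, ht, rfl⟩, ?_, ?_⟩
        · rwa [Fin.rev_lt_rev]
        · rwa [Fin.rev_rev, Fin.rev_rev]
    rw [heq, Finset.card_image_of_injective _ hrevinj]
    exact h2 m hm

lemma phaseMax_cases {n δ : ℕ} (pool : Finset (Fin n)) :
    ∀ (fuel : ℕ) (C : Finset (Fin n)) (v : Fin n), v ∈ phaseMax δ pool fuel C →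
      v ∈ C ∨ ∃ (C' : Finset (Fin n)) (h : (pool \ C').Nonempty),
        C'.card < δ ∧ v = (pool \ C').max' h := by
  intro fuel
  induction fuel with
  | zero => intro C v hv; exact Or.inl hv
  | succ fuel ih =>
    intro C v hv
    rw [phaseMax] at hv
    split_ifs at hv with h
    · rcases ih _ v hv with hmem | hex
      · rcases Finset.mem_insert.1 hmem with rfl | hC
        · exact Or.inr ⟨C, h.2, h.1, rfl⟩
        · exact Or.inl hC
      · exact Or.inr hex
    · exact Or.inl hv

lemma phaseMin_cases {n δ : ℕ} (pool : Finset (Fin n)) :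
    ∀ (fuel : ℕ) (C : Finset (Fin n)) (v : Fin n), v ∈ phaseMin δ pool fuel C →
      v ∈ C ∨ ∃ (C' : Finset (Fin n)) (h : (pool \ C').Nonempty),
        C'.card < δ ∧ v = (pool \ C').min' h := by
  intro fuel
  induction fuel with
  | zero => intro C v hv; exact Or.inl hv
  | succ fuel ih =>
    intro C v hv
    rw [phaseMin] at hv
    split_ifs at hv with h
    · rcases ih _ v hv with hmem | hex
      · rcases Finset.mem_insert.1 hmem with rfl | hC
        · exact Or.inr ⟨C, h.2, h.1, rfl⟩
        · exact Or.inl hC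
      · exact Or.inr hex
    · exact Or.inl hv

lemma phaseMax_card {n δ : ℕ} (pool : Finset (Fin n)) :
    ∀ (fuel : ℕ) (C : Finset (Fin n)), (phaseMax δ pool fuel C).card ≤ max C.card δ := by
  intro fuel
  induction fuel with
  | zero => intro C; rw [phaseMax]; exact le_max_left _ _
  | succ fuel ih =>
    intro C
    rw [phaseMax]
    split_ifs with h
    · have := ih (insert ((pool \ C).max' h.2) C)
      have hc : (insert ((pool \ C).max' h.2) C).card ≤ δ := by
        have := Finset.card_insert_le ((pool \ C).max' h.2) C
        omega
      calc (phaseMax δ pool fuel _).card ≤ _ := this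
        _ ≤ max C.card δ := by omega
    · exact le_max_left _ _

lemma phaseMin_card {n δ : ℕ} (pool : Finset (Fin n)) :
    ∀ (fuel : ℕ) (C : Finset (Fin n)), (phaseMin δ pool fuel C).card ≤ max C.card δ := by
  intro fuel
  induction fuel with
  | zero => intro C; rw [phaseMin]; exact le_max_left _ _
  | succ fuel ih =>
    intro C
    rw [phaseMin]
    split_ifs with h
    · have := ih (insert ((pool \ C).min' h.2) C)
      have hc : (insert ((pool \ C).min' h.2) C).card ≤ δ := by
        have := Finset.card_insert_le ((pool \ C).min' h.2) C
        omega
      calc (phaseMin δ pool fuel _).card ≤ _ := this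
        _ ≤ max C.card δ := by omega
    · exact le_max_left _ _

/-- Case analysis for membership in `Cset`. -/
lemma Cset_cases {n : ℕ} {x : Fin n → EuclideanSpace ℝ (Fin 2)} {R : ℝ} {δ : ℕ}
    {k v : Fin n} (h : v ∈ Cset n x R δ k) :
    initiates n x R k v ∨
    (∃ (C' : Finset (Fin n)) (h' : (lesserF n x R k \ C').Nonempty),
      C'.card < δ ∧ v = (lesserF n x R k \ C').max' h') ∨
    (∃ (C' : Finset (Fin n)) (h' : (greaterF n x R k \ C').Nonempty),
      C'.card < δ ∧ v = (greaterF n x R k \ C').min' h') := by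
  rw [Cset] at h
  rcases phaseMin_cases _ _ _ _ h with hB | hmin
  · rcases phaseMax_cases _ _ _ _ hB with hM | hmax
    · exact Or.inl ((Finset.mem_filter.1 hM).2)
    · exact Or.inr (Or.inl hmax)
  · exact Or.inr (Or.inr hmin)

/-- Any member of `Cset k` is a Gilbert neighbor of `k`. -/
lemma Cset_mem_basic {n : ℕ} {x : Fin n → EuclideanSpace ℝ (Fin 2)} {R : ℝ} {δ : ℕ}
    {k v : Fin n} (h : v ∈ Cset n x R δ k) :
    (v < k ∨ k < v) ∧ dist (x k) (x v) ≤ R := by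
  rcases Cset_cases h with hin | ⟨C', h', _, rfl⟩ | ⟨C', h', _, rfl⟩
  · obtain ⟨⟨hlt, hd⟩, _⟩ := hin
    exact ⟨Or.inl hlt, hd⟩
  · have := Finset.max'_mem _ h'
    have := (Finset.mem_sdiff.1 this).1
    simp only [lesserF, Finset.mem_filter] at this
    exact ⟨Or.inl this.2.1, this.2.2⟩
  · have := Finset.min'_mem _ h'
    have := (Finset.mem_sdiff.1 this).1
    simp only [greaterF, Finset.mem_filter] at this
    exact ⟨Or.inr this.2.1, this.2.2⟩

end Aux

/-- Under Algorithm 2, at most `5δ` greater neighbors and at most `5δ` lesser neighbors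
of any vertex `i` initiate a connection to `i`; hence every vertex has degree at most
`max δ 5 + 10δ` in the final topology. -/
theorem topo2_degree_upper_bound
    (n : ℕ) (x : Fin n → EuclideanSpace ℝ (Fin 2)) (R : ℝ) (hR : 0 < R)
    (δ : ℕ) (hδ : 1 ≤ δ) (i : Fin n) :
    Nat.card {k : Fin n // i < k ∧ i ∈ Cset n x R δ k} ≤ 5 * δ ∧
    Nat.card {k : Fin n // k < i ∧ i ∈ Cset n x R δ k} ≤ 5 * δ ∧
    Nat.card ((topo2 n x R δ).neighborSet i) ≤ max δ 5 + 10 * δ := by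
  classical
  set Splus := Finset.univ.filter (fun k => i < k ∧ i ∈ Cset n x R δ k) with hSplus
  set Sminus := Finset.univ.filter (fun k => k < i ∧ i ∈ Cset n x R δ k) with hSminus
  -- distance facts
  have hdistp : ∀ k ∈ Splus, dist (x i) (x k) ≤ R := by
    intro k hk
    obtain ⟨-, -, hC⟩ := Finset.mem_filter.1 hk
    rw [dist_comm]
    exact (Cset_mem_basic hC).2
  have hdistm : ∀ k ∈ Sminus, dist (x i) (x k) ≤ R := by
    intro k hk
    obtain ⟨-, -, hC⟩ := Finset.mem_filter.1 hk
    rw [dist_comm]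
    exact (Cset_mem_basic hC).2
  -- the 5δ bound for greater neighbors
  have hplus : Splus.card ≤ 5 * δ := by
    apply five_delta x R (x i) δ Splus hdistp
    intro k hk
    obtain ⟨-, hik, hC⟩ := Finset.mem_filter.1 hk
    by_contra hTge
    push_neg at hTge
    set T := Splus.filter (fun t => t < k ∧ dist (x k) (x t) ≤ R) with hT
    rcases Cset_cases hC with hin | ⟨C', h', hcard, heq⟩ | ⟨C', h', hcard, heq⟩
    · obtain ⟨hiN, hmax⟩ := hin
      have hTne : T.Nonempty := Finset.card_pos.1 (by omega)
      obtain ⟨t, ht⟩ := hTne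
      obtain ⟨htS, htk, htd⟩ := Finset.mem_filter.1 ht
      obtain ⟨-, hit, htC⟩ := Finset.mem_filter.1 htS
      have htN : t ∈ lesserN n x R k := ⟨htk, htd⟩
      have hadj : ((gilbert n x R).induce (lesserN n x R k)).Adj ⟨i, hiN⟩ ⟨t, htN⟩ := by
        refine ⟨ne_of_lt hit, ?_⟩
        rw [dist_comm]
        exact (Cset_mem_basic htC).2
      have := hmax t htN hadj.reachable
      exact absurd this (not_le.2 hit)
    · have hsub : T ⊆ C' := by
        intro t ht
        obtain ⟨htS, htk, htd⟩ := Finset.mem_filter.1 ht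
        obtain ⟨-, hit, -⟩ := Finset.mem_filter.1 htS
        by_contra htC'
        have htF : t ∈ lesserF n x R k :=
          Finset.mem_filter.2 ⟨Finset.mem_univ t, htk, htd⟩
        have : t ≤ (lesserF n x R k \ C').max' h' :=
          Finset.le_max' _ t (Finset.mem_sdiff.2 ⟨htF, htC'⟩)
        rw [← heq] at this
        exact absurd this (not_le.2 hit)
      have := Finset.card_le_card hsub
      omega
    · have hmem := Finset.min'_mem _ h'
      have hmem' : i ∈ greaterF n x R k := heq ▸ (Finset.mem_sdiff.1 hmem).1
      simp only [greaterF, Finset.mem_filter] at hmem'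
      exact absurd hmem'.2.1 (not_lt.2 (le_of_lt hik))
  -- the 5δ bound for lesser neighbors
  have hminus : Sminus.card ≤ 5 * δ := by
    apply five_delta' x R (x i) δ Sminus hdistm
    intro k hk
    obtain ⟨-, hki, hC⟩ := Finset.mem_filter.1 hk
    by_contra hTge
    push_neg at hTge
    set T := Sminus.filter (fun t => k < t ∧ dist (x k) (x t) ≤ R) with hT
    rcases Cset_cases hC with hin | ⟨C', h', hcard, heq⟩ | ⟨C', h', hcard, heq⟩
    · obtain ⟨⟨hik, -⟩, -⟩ := hin
      exact absurd hik (not_lt.2 (le_of_lt hki))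
    · have hmem := Finset.max'_mem _ h'
      have hmem' : i ∈ lesserF n x R k := heq ▸ (Finset.mem_sdiff.1 hmem).1
      simp only [lesserF, Finset.mem_filter] at hmem'
      exact absurd hmem'.2.1 (not_lt.2 (le_of_lt hki))
    · have hsub : T ⊆ C' := by
        intro t ht
        obtain ⟨htS, htk, htd⟩ := Finset.mem_filter.1 ht
        obtain ⟨-, hti, -⟩ := Finset.mem_filter.1 htS
        by_contra htC'
        have htF : t ∈ greaterF n x R k :=
          Finset.mem_filter.2 ⟨Finset.mem_univ t, htk, htd⟩
        have : (greaterF n x R k \ C').min' h' ≤ t :=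
          Finset.min'_le _ t (Finset.mem_sdiff.2 ⟨htF, htC'⟩)
        rw [← heq] at this
        exact absurd this (not_le.2 hti)
      have := Finset.card_le_card hsub
      omega
  -- |C_i| ≤ max δ 5
  have hM5 : (MsetF n x R i).card ≤ 5 := by
    apply indep_card_le_five x (x i) (MsetF n x R i)
    · intro k hk
      have hin := (Finset.mem_filter.1 hk).2
      exact hin.1.2
    · intro a ha b hb hab
      obtain ⟨haN, hamax⟩ := (Finset.mem_filter.1 ha).2
      obtain ⟨hbN, hbmax⟩ := (Finset.mem_filter.1 hb).2
      by_contra hle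
      push_neg at hle
      have hadj : ((gilbert n x R).induce (lesserN n x R i)).Adj ⟨a, haN⟩ ⟨b, hbN⟩ :=
        ⟨hab, hle⟩
      have h1 := hamax b hbN hadj.reachable
      have h2 := hbmax a haN hadj.symm.reachable
      exact hab (le_antisymm h2 h1)
  have hCcard : (Cset n x R δ i).card ≤ max δ 5 := by
    rw [Cset]
    have hmin := phaseMin_card (δ := δ) (greaterF n x R i) n
      (phaseMax δ (lesserF n x R i) n (MsetF n x R i))
    have hmax := phaseMax_card (δ := δ) (lesserF n x R i) n (MsetF n x R i)
    rcases le_total δ 5 with h | h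
    · simp only [max_eq_right h]
      omega
    · simp only [max_eq_left h]
      omega
  -- translate Nat.card of subtypes to Finset cards
  have e1 : Nat.card {k : Fin n // i < k ∧ i ∈ Cset n x R δ k} = Splus.card := by
    rw [Nat.card_eq_fintype_card]
    apply Fintype.card_of_subtype
    intro k
    simp [hSplus]
  have e2 : Nat.card {k : Fin n // k < i ∧ i ∈ Cset n x R δ k} = Sminus.card := by
    rw [Nat.card_eq_fintype_card]
    apply Fintype.card_of_subtype
    intro k
    simp [hSminus]
  refine ⟨by rw [e1]; exact hplus, by rw [e2]; exact hminus, ?_⟩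
  -- the degree bound
  set F : Finset (Fin n) := Cset n x R δ i ∪ Splus ∪ Sminus with hF
  have hsub : (topo2 n x R δ).neighborSet i ⊆ ↑F := by
    intro k hk
    obtain ⟨hne, hor⟩ : i ≠ k ∧ (k ∈ Cset n x R δ i ∨ i ∈ Cset n x R δ k) := hk
    simp only [hF, Finset.coe_union, Set.mem_union, Finset.mem_coe]
    rcases hor with hkC | hiC
    · exact Or.inl (Or.inl hkC)
    · rcases hne.lt_or_gt with hik | hki
      · exact Or.inl (Or.inr (Finset.mem_filter.2 ⟨Finset.mem_univ k, hik, hiC⟩))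
      · exact Or.inr (Finset.mem_filter.2 ⟨Finset.mem_univ k, hki, hiC⟩)
  have hmono : Nat.card ((topo2 n x R δ).neighborSet i) ≤ Nat.card (↑F : Set (Fin n)) :=
    Nat.card_mono (Set.toFinite _) hsub
  have hFcard : Nat.card (↑F : Set (Fin n)) = F.card := by
    rw [Nat.card_coe_set_eq, Set.ncard_coe_finset]
  have hunion : F.card ≤ (Cset n x R δ i).card + Splus.card + Sminus.card := by
    calc F.card ≤ (Cset n x R δ i ∪ Splus).card + Sminus.card := Finset.card_union_le _ _
      _ ≤ (Cset n x R δ i).card + Splus.card + Sminus.card := by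
          have := Finset.card_union_le (Cset n x R δ i) Splus
          omega
  rw [hFcard] at hmono
  omega
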